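/- arXiv:2509.09008 — 6 statements merged into one kernel-verified Lean document; each statement's English description precedes it below -/
import Mathlib

section
/- Let f = x² + a₁x + a₀ ∈ ℝ[x] be monic with non-real roots re^{±iθ} where r > 0 and 0 < θ < π. Then there exists a nonzero polynomial g ∈ ℝ[x] with deg(g) ≤ ⌈π/θ⌉ - 2 such that every coefficient of g·f is nonnegative. -/
open Polynomial Real

noncomputable def gP (r θ : ℝ) : ℕ → ℝ[X]
  | 0 => C (Real.sin θ)
  | (m+1) => C r * gP r θ m + C (Real.sin (((m:ℝ) + 2) * θ)) * X ^ (m+1)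

lemma gP_natDegree (r θ : ℝ) : ∀ m, (gP r θ m).natDegree ≤ m := by
  intro m
  induction m with
  | zero => simp [gP]
  | succ m ih =>
    refine le_trans (natDegree_add_le _ _) (max_le ?_ ?_)
    · exact le_trans (natDegree_C_mul_le _ _) (le_trans ih (Nat.le_succ m))
    · exact le_trans (natDegree_C_mul_le _ _) (natDegree_X_pow_le _)

lemma gP_key (r θ : ℝ) : ∀ m, gP r θ m * (X ^ 2 - C (2 * r * Real.cos θ) * X + C (r ^ 2)) =
    C (r ^ (m+2) * Real.sin θ) - C (r * Real.sin (((m:ℝ) + 2) * θ)) * X ^ (m+1)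
      + C (Real.sin (((m:ℝ) + 1) * θ)) * X ^ (m+2) := by
  intro m
  induction m with
  | zero =>
    simp only [gP, Nat.cast_zero]
    have h1 : ((0:ℝ) + 2) * θ = 2 * θ := by ring
    have h2 : ((0:ℝ) + 1) * θ = θ := by ring
    rw [h1, h2, Real.sin_two_mul]
    simp only [C_mul, C_add, C_sub, map_ofNat, C_pow]
    ring
  | succ m ih =>
    have hsin : Real.sin ((((m:ℕ):ℝ) + 1 + 2) * θ)
        = 2 * Real.cos θ * Real.sin (((m:ℝ) + 2) * θ) - Real.sin (((m:ℝ) + 1) * θ) := by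
      have e1 : ((m:ℝ) + 1 + 2) * θ = ((m:ℝ) + 2) * θ + θ := by ring
      have e2 : ((m:ℝ) + 1) * θ = ((m:ℝ) + 2) * θ - θ := by ring
      rw [e1, Real.sin_add, e2, Real.sin_sub]; ring
    simp only [gP, Nat.cast_succ]
    rw [add_mul, mul_assoc, ih, hsin]
    simp only [C_mul, C_add, C_sub, map_ofNat, C_pow]
    ring

theorem stmt0 (r θ : ℝ) (hr : 0 < r) (hθ : 0 < θ) (hθπ : θ < π)
    (s : ℕ) (hs : (s : ℤ) = ⌈π / θ⌉ - 2) :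
    ∃ g : ℝ[X], g ≠ 0 ∧ g.natDegree ≤ s ∧
      ∀ n : ℕ,
        0 ≤ (g * (X ^ 2 - C (2 * r * Real.cos θ) * X + C (r ^ 2))).coeff n := by
  have hsinθ : 0 < Real.sin θ := Real.sin_pos_of_pos_of_lt_pi hθ hθπ
  have hceil : (⌈π / θ⌉ : ℝ) = (s : ℝ) + 2 := by
    have : (⌈π / θ⌉ : ℤ) = (s : ℤ) + 2 := by omega
    exact_mod_cast congrArg (fun z : ℤ => (z : ℝ)) this
  -- (s+1)θ < π
  have h1 : ((s : ℝ) + 1) * θ < π := by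
    have h := Int.ceil_lt_add_one (π / θ)
    rw [hceil] at h
    have : π / θ > (s:ℝ) + 1 := by linarith
    calc ((s : ℝ) + 1) * θ < (π / θ) * θ := by
          exact mul_lt_mul_of_pos_right this hθ
      _ = π := div_mul_cancel₀ _ (ne_of_gt hθ)
  -- π ≤ (s+2)θ
  have h2 : π ≤ ((s : ℝ) + 2) * θ := by
    have h := Int.le_ceil (π / θ)
    rw [hceil] at h
    calc π = (π / θ) * θ := (div_mul_cancel₀ _ (ne_of_gt hθ)).symm
      _ ≤ ((s : ℝ) + 2) * θ := mul_le_mul_of_nonneg_right h (le_of_lt hθ)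
  have h3 : ((s : ℝ) + 2) * θ ≤ 2 * π := by nlinarith [Real.pi_pos]
  have hsin1 : 0 ≤ Real.sin (((s : ℝ) + 1) * θ) :=
    Real.sin_nonneg_of_nonneg_of_le_pi (by positivity) (le_of_lt h1)
  have hsin2 : Real.sin (((s : ℝ) + 2) * θ) ≤ 0 := by
    have : Real.sin (((s : ℝ) + 2) * θ - π) = -Real.sin (((s : ℝ) + 2) * θ) :=
      Real.sin_sub_pi _
    nlinarith [Real.sin_nonneg_of_nonneg_of_le_pi (by linarith : (0:ℝ) ≤ ((s : ℝ) + 2) * θ - π)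
      (by linarith [Real.pi_pos] : ((s : ℝ) + 2) * θ - π ≤ π)]
  refine ⟨gP r θ s, ?_, gP_natDegree r θ s, ?_⟩
  · intro h0
    have := gP_key r θ s
    rw [h0, zero_mul] at this
    have hc := congrArg (fun p : ℝ[X] => p.coeff 0) this
    simp only [coeff_zero, coeff_add, coeff_sub, coeff_C, coeff_C_mul, coeff_X_pow] at hc
    rw [if_pos trivial, if_neg (by omega : ¬ (0 = s + 1)), if_neg (by omega : ¬ (0 = s + 2))] at hc
    have hpos : (0:ℝ) < r ^ (s+2) * Real.sin θ := by positivity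
    nlinarith
  · intro n
    rw [gP_key r θ s]
    simp only [coeff_add, coeff_sub, coeff_C, coeff_C_mul, coeff_X_pow]
    have hn1 : s + 1 ≠ 0 := by omega
    split_ifs with hA hB hC hB hC hC <;> try omega
    all_goals simp_all
    · positivity
    · nlinarith
end

section
/- Let f = x² + a₁x + a₀ ∈ ℝ[x] be monic with non-real roots re^{±iθ}, r > 0, 0 < θ < π, and let s = ⌈π/θ⌉ - 2. Then for every nonzero g ∈ ℝ[x] with deg(g) < s, some coefficient of g·f is negative. -/
open Polynomial Real

theorem stmt1 (r θ : ℝ) (hr : 0 < r) (hθ : 0 < θ) (hθπ : θ < π)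
    (s : ℕ) (hs : (s : ℤ) = ⌈π / θ⌉ - 2) :
    ∀ g : ℝ[X], g ≠ 0 → g.natDegree < s →
      ∃ n : ℕ,
        (g * (X ^ 2 - C (2 * r * Real.cos θ) * X + C (r ^ 2))).coeff n < 0 := by
  intro g hg hgs
  by_contra hcon
  push_neg at hcon
  set f : ℝ[X] := X ^ 2 - C (2 * r * Real.cos θ) * X + C (r ^ 2) with hf
  have hfm : f.Monic := by
    unfold f
    monicity!
  have hfne : f ≠ 0 := hfm.ne_zero
  have hgf : g * f ≠ 0 := mul_ne_zero hg hfne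
  have hfdeg : f.natDegree = 2 := by unfold f; compute_degree!
  have hdeg : (g * f).natDegree = g.natDegree + 2 := by
    rw [Polynomial.natDegree_mul hg hfne, hfdeg]
  set D := (g * f).natDegree with hD
  -- bound: D * θ < π
  have hsring : (s : ℝ) = (⌈π / θ⌉ : ℝ) - 2 := by exact_mod_cast hs
  have hceil : (⌈π / θ⌉ : ℝ) < π / θ + 1 := Int.ceil_lt_add_one _
  have hDle : (D : ℝ) ≤ (s : ℝ) + 1 := by
    have : D ≤ s + 1 := by omega
    exact_mod_cast this
  have hDθ : (D : ℝ) * θ < π := by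
    have h1 : (D : ℝ) < π / θ := by
      calc (D : ℝ) ≤ (s : ℝ) + 1 := hDle
        _ = (⌈π / θ⌉ : ℝ) - 1 := by rw [hsring]; ring
        _ < π / θ := by linarith
    calc (D : ℝ) * θ < (π / θ) * θ := by exact mul_lt_mul_of_pos_right h1 hθ
      _ = π := by field_simp
  -- complex root
  set z : ℂ := (r : ℂ) * Complex.exp (θ * Complex.I) with hz
  have hroot : Polynomial.eval₂ (algebraMap ℝ ℂ) z f = 0 := by
    simp only [hf, eval₂_add, eval₂_sub, eval₂_mul, eval₂_X_pow, eval₂_C, eval₂_X, Complex.coe_algebraMap]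
    rw [hz, Complex.exp_mul_I, ← Complex.ofReal_cos, ← Complex.ofReal_sin]
    have h1 : ((Real.sin θ:ℝ):ℂ)^2 + ((Real.cos θ:ℝ):ℂ)^2 = 1 := by
      exact_mod_cast Real.sin_sq_add_cos_sq θ
    have h2 : (Complex.I : ℂ) ^ 2 = -1 := Complex.I_sq
    push_cast [← Complex.ofReal_cos, ← Complex.ofReal_sin]
    linear_combination (-((r:ℂ)^2)) * h1 + (r:ℂ)^2 * ((Real.sin θ:ℝ):ℂ)^2 * h2
  have heval : Polynomial.eval₂ (algebraMap ℝ ℂ) z (g * f) = 0 := by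
    rw [eval₂_mul, hroot, mul_zero]
  have hsum : ∑ n ∈ Finset.range (D + 1),
      (algebraMap ℝ ℂ) ((g * f).coeff n) * z ^ n = 0 := by
    rw [← Polynomial.eval₂_eq_sum_range, heval]
  have him : ∀ n : ℕ, ((algebraMap ℝ ℂ) ((g * f).coeff n) * z ^ n).im
      = (g * f).coeff n * (r ^ n * Real.sin (n * θ)) := by
    intro n
    have hzn : z ^ n = ((r ^ n : ℝ) : ℂ) * Complex.exp ((↑(n * θ : ℝ)) * Complex.I) := by
      rw [hz, mul_pow, ← Complex.exp_nat_mul]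
      push_cast
      ring_nf
    rw [hzn, Complex.exp_mul_I, ← Complex.ofReal_cos, ← Complex.ofReal_sin]
    have h : ((algebraMap ℝ ℂ) ((g * f).coeff n)) *
        (((r ^ n : ℝ) : ℂ) * (↑(Real.cos (↑n * θ)) + ↑(Real.sin (↑n * θ)) * Complex.I))
        = ↑((g * f).coeff n * r ^ n * Real.cos (↑n * θ)) +
          ↑((g * f).coeff n * (r ^ n * Real.sin (↑n * θ))) * Complex.I := by
      simp only [Complex.coe_algebraMap]
      push_cast
      ring
    rw [h, Complex.add_im, Complex.ofReal_im, Complex.mul_I_im, Complex.ofReal_re, zero_add]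
  have hsum0 : ∑ n ∈ Finset.range (D + 1),
      (g * f).coeff n * (r ^ n * Real.sin (n * θ)) = 0 := by
    have := congrArg Complex.im hsum
    rwa [Complex.im_sum, Finset.sum_congr rfl (fun n _ => him n)] at this
  have hnonneg : ∀ n ∈ Finset.range (D + 1),
      0 ≤ (g * f).coeff n * (r ^ n * Real.sin (n * θ)) := by
    intro n hn
    rw [Finset.mem_range] at hn
    have hnθ : (n : ℝ) * θ ≤ π := by
      have : (n : ℝ) ≤ D := by exact_mod_cast Nat.lt_succ_iff.mp hn
      nlinarith
    have hsin : 0 ≤ Real.sin (n * θ) :=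
      Real.sin_nonneg_of_nonneg_of_le_pi (by positivity) hnθ
    have := hcon n
    positivity
  have hall := (Finset.sum_eq_zero_iff_of_nonneg hnonneg).mp hsum0
  have hDmem : D ∈ Finset.range (D + 1) := Finset.self_mem_range_succ D
  have hterm := hall D hDmem
  have hsinD : 0 < Real.sin (D * θ) := by
    apply Real.sin_pos_of_pos_of_lt_pi
    · have : (1 : ℝ) ≤ (D : ℝ) := by
        have : 1 ≤ D := by omega
        exact_mod_cast this
      nlinarith
    · exact hDθ
  have hrD : (0 : ℝ) < r ^ D := by positivity
  have hcD : (g * f).coeff D = 0 := by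
    by_contra hne
    have h1 : 0 < (g * f).coeff D := lt_of_le_of_ne (hcon D) (Ne.symm hne)
    have := mul_pos h1 (mul_pos hrD hsinD)
    linarith
  exact (Polynomial.leadingCoeff_ne_zero.mpr hgf) hcD
end

section
/- Let r > 0, 0 < θ < π, s = ⌈π/θ⌉ - 2, and define g(x) = Σ_{i=0}^{s} r^{s-i} · (sin((s-i+1)θ)/sin θ) · x^i and f(x) = x² - 2r cos(θ) x + r². Then every coefficient of g·f is nonnegative. -/
open Polynomial Real

theorem stmt2 (r θ : ℝ) (hr : 0 < r) (hθ : 0 < θ) (hθπ : θ < π)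
    (s : ℕ) (hs : (s : ℤ) = ⌈π / θ⌉ - 2) :
    ∀ n : ℕ,
      0 ≤ ((∑ i ∈ Finset.range (s + 1),
              C (r ^ (s - i) * Real.sin ((s - i + 1 : ℕ) * θ) / Real.sin θ) * X ^ i) *
            (X ^ 2 - C (2 * r * Real.cos θ) * X + C (r ^ 2))).coeff n := by
  have hsin : 0 < Real.sin θ := Real.sin_pos_of_pos_of_lt_pi hθ hθπ
  set b : ℕ → ℝ := fun i => r ^ (s - i) * Real.sin ((s - i + 1 : ℕ) * θ) / Real.sin θ with hbdef
  set g : ℝ[X] := ∑ i ∈ Finset.range (s + 1), C (b i) * X ^ i with hgdef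
  -- coefficient of g
  have hg : ∀ k, g.coeff k = if k ≤ s then b k else 0 := by
    intro k
    rw [hgdef, Polynomial.finset_sum_coeff]
    simp [coeff_C_mul, coeff_X_pow, Finset.sum_ite_eq, Nat.lt_succ_iff]
  -- coefficient of the product
  have hP : ∀ n, ((g * (X ^ 2 - C (2 * r * Real.cos θ) * X + C (r ^ 2))).coeff n) =
      (if 2 ≤ n then g.coeff (n-2) else 0)
        - 2 * r * Real.cos θ * (if 1 ≤ n then g.coeff (n-1) else 0)
        + r ^ 2 * g.coeff n := by
    intro n
    have h1 : g * (X ^ 2 - C (2 * r * Real.cos θ) * X + C (r ^ 2)) =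
        g * X ^ 2 - C (2 * r * Real.cos θ) * (g * X ^ 1) + C (r ^ 2) * g := by ring
    rw [h1, coeff_add, coeff_sub, coeff_mul_X_pow', coeff_C_mul, coeff_C_mul,
      coeff_mul_X_pow', mul_ite, mul_zero]
  -- ceiling bounds
  have hsr : (s : ℝ) = (⌈π / θ⌉ : ℤ) - 2 := by exact_mod_cast hs
  have hup : ((s : ℝ) + 1) * θ < π := by
    have h1 : ((⌈π / θ⌉ : ℤ) : ℝ) < π / θ + 1 := Int.ceil_lt_add_one _
    have h2 : (s : ℝ) + 1 < π / θ := by linarith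
    calc ((s : ℝ) + 1) * θ < (π / θ) * θ := by nlinarith
    _ = π := by field_simp
  have hlow : π ≤ ((s : ℝ) + 2) * θ := by
    have h1 : π / θ ≤ ((⌈π / θ⌉ : ℤ) : ℝ) := Int.le_ceil _
    have h2 : π / θ ≤ (s : ℝ) + 2 := by linarith
    calc π = (π / θ) * θ := by field_simp
    _ ≤ ((s : ℝ) + 2) * θ := by nlinarith
  have hup2 : ((s : ℝ) + 2) * θ < 2 * π := by nlinarith
  have hsin2 : Real.sin (((s : ℝ) + 2) * θ) ≤ 0 := by
    have h0 : 0 ≤ Real.sin ((((s : ℝ) + 2) * θ) - π) :=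
      Real.sin_nonneg_of_nonneg_of_le_pi (by linarith) (by linarith)
    rw [Real.sin_sub_pi] at h0
    linarith
  -- nonnegativity of b
  have hb : ∀ i : ℕ, i ≤ s → 0 ≤ b i := by
    intro i hi
    have h1 : 0 ≤ Real.sin (((s - i + 1 : ℕ) : ℝ) * θ) := by
      apply Real.sin_nonneg_of_nonneg_of_le_pi
      · positivity
      · have h2 : ((s - i + 1 : ℕ) : ℝ) ≤ (s : ℝ) + 1 := by
          have : s - i + 1 ≤ s + 1 := by omega
          exact_mod_cast this
        nlinarith
    rw [hbdef]
    positivity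
  -- key trig identity
  have key : ∀ x : ℝ, Real.sin (x + 2 * θ) + Real.sin x = 2 * Real.cos θ * Real.sin (x + θ) := by
    intro x
    have h1 := Real.sin_add (x + θ) θ
    have h2 := Real.sin_sub (x + θ) θ
    have e1 : x + θ + θ = x + 2 * θ := by ring
    have e2 : x + θ - θ = x := by ring
    rw [e1] at h1; rw [e2] at h2; linarith
  intro n
  rw [hP, hg, hg, hg]
  match n, s with
  | 0, s =>
    simp only [if_neg (by omega : ¬ (2:ℕ) ≤ 0), if_neg (by omega : ¬ (1:ℕ) ≤ 0),
      if_pos (Nat.zero_le s)]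
    have := hb 0 (Nat.zero_le s)
    nlinarith
  | 1, 0 =>
    have hcos : Real.cos θ ≤ 0 := by
      apply Real.cos_nonpos_of_pi_div_two_le_of_le
      · simp at hlow; linarith
      · linarith [Real.pi_pos]
    simp only [if_neg (by omega : ¬ (2:ℕ) ≤ 1), if_pos (le_refl 1), if_neg (by omega : ¬ (1:ℕ) ≤ 0)]
    norm_num
    have hb0 : b 0 = 1 := by
      simp only [hbdef]
      norm_num
      exact ne_of_gt hsin
    rw [hb0]
    nlinarith
  | 1, (t+1) =>
    simp only [if_neg (by omega : ¬ (2:ℕ) ≤ 1), if_pos (le_refl 1),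
      if_pos (by omega : 1 ≤ t + 1), if_pos (by omega : 1 - 1 ≤ t + 1)]
    norm_num
    have hk := key ((t + 1 : ℝ) * θ)
    have hb0 : b 0 = r ^ (t+1) * Real.sin (((t:ℝ) + 2) * θ) / Real.sin θ := by
      simp only [hbdef]
      norm_num
      congr 2
      push_cast; ring_nf
    have hb1 : b 1 = r ^ t * Real.sin (((t:ℝ) + 1) * θ) / Real.sin θ := by
      simp only [hbdef]
      have e : t + 1 - 1 = t := by omega
      rw [e]
      congr 2
      push_cast; ring_nf
    have hs2 : Real.sin (((t:ℝ) + 3) * θ) ≤ 0 := by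
      have e : ((t:ℝ) + 3) = ((t:ℕ)+1 : ℝ) + 2 := by push_cast; ring
      rw [e]; convert hsin2 using 3 <;> push_cast <;> ring
    have hexpr : 0 - 2 * r * Real.cos θ * b 0 + r ^ 2 * b 1 =
        -(r ^ (t + 2) / Real.sin θ) * Real.sin (((t:ℝ) + 3) * θ) := by
      rw [hb0, hb1]
      have e1 : ((t:ℝ) + 3) * θ = (t + 1 : ℝ) * θ + 2 * θ := by ring
      have e2 : ((t:ℝ) + 2) * θ = (t + 1 : ℝ) * θ + θ := by ring
      rw [e1, e2]
      linear_combination (r ^ (t + 2) / Real.sin θ) * hk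
    have hpos : 0 ≤ r ^ (t+2) / Real.sin θ := by positivity
    nlinarith [hexpr, mul_nonneg hpos (neg_nonneg.mpr hs2)]
  | (n+2), s =>
    by_cases h : n + 2 ≤ s
    · obtain ⟨k, hk⟩ : ∃ k, s = n + 2 + k := ⟨s - (n+2), by omega⟩
      subst hk
      simp only [if_pos (by omega : 2 ≤ n + 2), if_pos (by omega : 1 ≤ n + 2),
        if_pos (by omega : n + 2 - 2 ≤ n + 2 + k), if_pos (by omega : n + 2 - 1 ≤ n + 2 + k),
        if_pos (by omega : n + 2 ≤ n + 2 + k)]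
      have e0 : n + 2 - 2 = n := by omega
      have e1 : n + 2 - 1 = n + 1 := by omega
      rw [e0, e1]
      have hbn : b n = r ^ (k + 2) * Real.sin (((k:ℝ) + 3) * θ) / Real.sin θ := by
        simp only [hbdef]
        have e : n + 2 + k - n = k + 2 := by omega
        rw [e]; congr 2; push_cast; ring
      have hbn1 : b (n+1) = r ^ (k + 1) * Real.sin (((k:ℝ) + 2) * θ) / Real.sin θ := by
        simp only [hbdef]
        have e : n + 2 + k - (n + 1) = k + 1 := by omega
        rw [e]; congr 2; push_cast; ring
      have hbn2 : b (n+2) = r ^ k * Real.sin (((k:ℝ) + 1) * θ) / Real.sin θ := by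
        simp only [hbdef]
        have e : n + 2 + k - (n + 2) = k := by omega
        rw [e]; congr 2; push_cast; ring
      have hk2 := key ((k + 1 : ℝ) * θ)
      have : b n - 2 * r * Real.cos θ * b (n+1) + r ^ 2 * b (n+2) = 0 := by
        rw [hbn, hbn1, hbn2]
        have e1 : ((k:ℝ) + 3) * θ = (k + 1 : ℝ) * θ + 2 * θ := by ring
        have e2 : ((k:ℝ) + 2) * θ = (k + 1 : ℝ) * θ + θ := by ring
        rw [e1, e2]
        linear_combination (r ^ (k + 2) / Real.sin θ) * hk2
      linarith
    · by_cases h1 : n + 1 = s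
      · -- n + 2 = s + 1, s = n+1 ≥ 1
        subst h1
        simp only [if_pos (by omega : 2 ≤ n + 2), if_pos (by omega : 1 ≤ n + 2),
          if_pos (by omega : n + 2 - 2 ≤ n + 1), if_pos (by omega : n + 2 - 1 ≤ n + 1),
          if_neg (by omega : ¬ n + 2 ≤ n + 1)]
        have e0 : n + 2 - 2 = n := by omega
        have e1 : n + 2 - 1 = n + 1 := by omega
        rw [e0, e1]
        have hbn : b n = r * Real.sin (((2:ℕ):ℝ) * θ) / Real.sin θ := by
          simp only [hbdef]
          have e : n + 1 - n = 1 := by omega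
          rw [e]; norm_num
        have hbn1 : b (n+1) = Real.sin ((1:ℕ) * θ) / Real.sin θ := by
          simp only [hbdef]
          have e : n + 1 - (n + 1) = 0 := by omega
          rw [e]; norm_num
        have h2 : Real.sin (((2:ℕ):ℝ) * θ) = 2 * Real.sin θ * Real.cos θ := by
          push_cast
          rw [Real.sin_two_mul]
        have hexpr : b n - 2 * r * Real.cos θ * b (n + 1) + r ^ 2 * 0 = 0 := by
          rw [hbn, hbn1, h2]
          have h3 : Real.sin (((1:ℕ):ℝ) * θ) = Real.sin θ := by norm_num
          rw [h3]
          field_simp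
          ring
        linarith
      · by_cases h2 : n = s
        · subst h2
          simp only [if_pos (by omega : 2 ≤ n + 2), if_pos (by omega : 1 ≤ n + 2),
            if_pos (by omega : n + 2 - 2 ≤ n), if_neg (by omega : ¬ n + 2 - 1 ≤ n),
            if_neg (by omega : ¬ n + 2 ≤ n)]
          have e0 : n + 2 - 2 = n := by omega
          rw [e0]
          have hbn : 0 ≤ b n := hb n (le_refl n)
          linarith
        · simp only [if_neg (by omega : ¬ n + 2 - 2 ≤ s), if_neg (by omega : ¬ n + 2 - 1 ≤ s),
            if_neg (by omega : ¬ n + 2 ≤ s)]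
          simp
end

section
/- Let r > 0, 0 < θ < π, s = ⌈π/θ⌉ - 2, and 0 ≤ i ≤ s. Then r^{s-i}·sin((s-i+1)θ)/sin(θ) ≤ r^{s-i}·sin((i+1)θ)/sin((s+1)θ), i.e., each coefficient of the Riggs multiplier is at most the corresponding coefficient of Meissner's monic multiplier. -/
open Real

lemma sin_mul_sin' (x y : ℝ) :
    Real.sin x * Real.sin y = (Real.cos (x - y) - Real.cos (x + y)) / 2 := by
  rw [Real.cos_sub, Real.cos_add]; ring

theorem stmt10 (r θ : ℝ) (hr : 0 < r) (hθ : 0 < θ) (hθπ : θ < π)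
    (s : ℕ) (hs : (s : ℤ) = ⌈π / θ⌉ - 2) :
    ∀ i : ℕ, i ≤ s →
      r ^ (s - i) * Real.sin (((s : ℝ) - i + 1) * θ) / Real.sin θ ≤
        r ^ (s - i) * Real.sin (((i : ℝ) + 1) * θ) / Real.sin (((s : ℝ) + 1) * θ) := by
  intro i hi
  have hiR : (i : ℝ) ≤ (s : ℝ) := by exact_mod_cast hi
  have hceil : ((⌈π / θ⌉ : ℤ) : ℝ) = (s : ℝ) + 2 := by
    have : (⌈π / θ⌉ : ℤ) = (s : ℤ) + 2 := by omega
    rw [this]; push_cast; ring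
  have hsinθ : 0 < Real.sin θ := Real.sin_pos_of_pos_of_lt_pi hθ hθπ
  -- (s+1)θ < π
  have h2 : ((s : ℝ) + 1) * θ < π := by
    have h := Int.ceil_lt_add_one (π / θ)
    rw [hceil] at h
    have : (s : ℝ) + 1 < π / θ := by linarith
    calc ((s : ℝ) + 1) * θ < (π / θ) * θ := by
          exact mul_lt_mul_of_pos_right this hθ
      _ = π := by field_simp
  have h3 : 0 < Real.sin (((s : ℝ) + 1) * θ) :=
    Real.sin_pos_of_pos_of_lt_pi (by positivity) h2
  -- π ≤ (s+2)θ
  have h4 : π ≤ ((s : ℝ) + 2) * θ := by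
    have h := Int.le_ceil (π / θ)
    rw [hceil] at h
    calc π = (π / θ) * θ := by field_simp
      _ ≤ ((s : ℝ) + 2) * θ := mul_le_mul_of_nonneg_right h hθ.le
  have h5 : ((s : ℝ) + 2) * θ < 2 * π := by nlinarith
  have h6 : Real.sin (((s : ℝ) + 2) * θ) ≤ 0 := by
    have := Real.sin_nonneg_of_nonneg_of_le_pi (x := ((s : ℝ) + 2) * θ - π)
      (by linarith) (by linarith)
    rw [Real.sin_sub_pi] at this
    linarith
  have h7 : 0 ≤ Real.sin (((s : ℝ) - i) * θ) := by
    apply Real.sin_nonneg_of_nonneg_of_le_pi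
    · nlinarith
    · nlinarith
  have key : Real.sin (((s : ℝ) + 1) * θ) * Real.sin (((s : ℝ) - i + 1) * θ)
      - Real.sin (((i : ℝ) + 1) * θ) * Real.sin θ
      = Real.sin (((s : ℝ) + 2) * θ) * Real.sin (((s : ℝ) - i) * θ) := by
    rw [sin_mul_sin', sin_mul_sin', sin_mul_sin']
    ring_nf
  have hmain : Real.sin (((s : ℝ) - i + 1) * θ) * Real.sin (((s : ℝ) + 1) * θ)
      ≤ Real.sin (((i : ℝ) + 1) * θ) * Real.sin θ := by
    nlinarith [mul_nonpos_of_nonpos_of_nonneg h6 h7]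
  rw [mul_div_assoc, mul_div_assoc]
  apply mul_le_mul_of_nonneg_left _ (pow_pos hr _).le
  rw [div_le_div_iff₀ hsinθ h3]
  exact hmain
end

section
/- Let f = x² - 2x + 2 and g = x² + 2x + 2. Then g·f = x⁴ + 4, so all coefficients of g·f are nonnegative, and no nonzero polynomial g' of degree < 2 satisfies that all coefficients of g'·f are nonnegative. -/
open Polynomial

theorem stmt16 :
    ((X ^ 2 + C 2 * X + C 2) * ((X : ℝ[X]) ^ 2 - C 2 * X + C 2) = X ^ 4 + C 4) ∧
      (∀ n : ℕ,
        0 ≤ ((X ^ 2 + C 2 * X + C 2) * ((X : ℝ[X]) ^ 2 - C 2 * X + C 2)).coeff n) ∧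
      ¬∃ g' : ℝ[X], g' ≠ 0 ∧ g'.natDegree < 2 ∧
        ∀ n : ℕ, 0 ≤ (g' * ((X : ℝ[X]) ^ 2 - C 2 * X + C 2)).coeff n := by
  have hid : ((X ^ 2 + C 2 * X + C 2) * ((X : ℝ[X]) ^ 2 - C 2 * X + C 2) = X ^ 4 + C 4) := by
    simp only [map_ofNat]; ring
  refine ⟨hid, ?_, ?_⟩
  · intro n
    rw [hid]
    simp only [coeff_add, coeff_X_pow, coeff_C]
    split_ifs <;> norm_num
  · rintro ⟨g', hne, hdeg, h⟩
    set a := g'.coeff 0 with ha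
    set b := g'.coeff 1 with hb
    have hg : g' = C b * X + C a :=
      g'.eq_X_add_C_of_natDegree_le_one (Nat.lt_succ_iff.mp hdeg)
    have hexp : g' * ((X : ℝ[X]) ^ 2 - C 2 * X + C 2)
        = C b * X ^ 3 + C (a - 2 * b) * X ^ 2 + C (2 * b - 2 * a) * X + C (2 * a) := by
      rw [hg]; simp only [C_sub, C_mul]; ring
    have h0 := h 0
    have h1 := h 1
    have h2 := h 2
    have h3 := h 3
    rw [hexp] at h0 h1 h2 h3
    simp only [coeff_add, coeff_C_mul, coeff_X_pow, coeff_X, coeff_C] at h0 h1 h2 h3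
    norm_num at h0 h1 h2 h3
    have ha0 : a = 0 := by linarith
    have hb0 : b = 0 := by linarith
    apply hne
    rw [hg, ha0, hb0]; simp
end

section
/- Let r > 0, 0 < θ < π, s = ⌈π/θ⌉ - 2, and let a₁ = -2r cos θ, a₀ = r². Define the (s+1)×(s+1) lower-triangular banded matrix R_s with 1's on the diagonal, a₁ on the first subdiagonal, and a₀ on the second subdiagonal. Then R_s is invertible, and the row vector b defined by b = (0,...,0,1)·R_s⁻¹ has entries b_i = r^{s-i} sin((s-i+1)θ)/sin θ. -/
set_option maxHeartbeats 1000000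

open Real Matrix

private lemma sum_ind {n : ℕ} (k : ℕ) (g : Fin n → ℝ) :
    (∑ i : Fin n, if (i : ℕ) = k then g i else 0) = if h : k < n then g ⟨k, h⟩ else 0 := by
  split_ifs with h
  · rw [Finset.sum_eq_single (⟨k, h⟩ : Fin n)]
    · exact if_pos rfl
    · intro i _ hi
      exact if_neg fun hk => hi (Fin.ext hk)
    · simp
  · apply Finset.sum_eq_zero
    intro i _
    exact if_neg (by omega)

private lemma key (r θ x₁ x₂ x₃ p q w : ℝ) (hsin : Real.sin θ ≠ 0)
    (h2 : x₂ = x₁ - 1) (h3 : x₃ = x₁ - 2) (hp : p = r * q) (hq : q = r * w) :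
    p * Real.sin ((x₁ + 1) * θ) / Real.sin θ
      + q * Real.sin ((x₂ + 1) * θ) / Real.sin θ * (-(2 * r * Real.cos θ))
      + w * Real.sin ((x₃ + 1) * θ) / Real.sin θ * r ^ 2 = 0 := by
  subst h2 h3 hp hq
  have e1 : (x₁ + 1) * θ = x₁ * θ + θ := by ring
  have e2 : (x₁ - 1 + 1) * θ = x₁ * θ := by ring
  have e3 : (x₁ - 2 + 1) * θ = x₁ * θ - θ := by ring
  rw [e1, e2, e3, Real.sin_add, Real.sin_sub]
  field_simp
  ring

theorem stmt17 (r θ : ℝ) (hr : 0 < r) (hθ : 0 < θ) (hθπ : θ < π)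
    (s : ℕ) (hs : (s : ℤ) = ⌈π / θ⌉ - 2)
    (R : Matrix (Fin (s + 1)) (Fin (s + 1)) ℝ)
    (hR : ∀ i j : Fin (s + 1),
      R i j =
        if (i : ℕ) = (j : ℕ) then 1
        else if (i : ℕ) = (j : ℕ) + 1 then -(2 * r * Real.cos θ)
        else if (i : ℕ) = (j : ℕ) + 2 then r ^ 2
        else 0) :
    IsUnit R ∧
      ∀ i : Fin (s + 1),
        Matrix.vecMul (fun j : Fin (s + 1) => if (j : ℕ) = s then (1 : ℝ) else 0) R⁻¹ i =
          r ^ (s - (i : ℕ)) * Real.sin (((s : ℝ) - (i : ℕ) + 1) * θ) / Real.sin θ := by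
  have hsin : Real.sin θ ≠ 0 := ne_of_gt (Real.sin_pos_of_pos_of_lt_pi hθ hθπ)
  -- invertibility
  have hdet : R.det = 1 := by
    rw [Matrix.det_of_lowerTriangular R]
    · apply Finset.prod_eq_one
      intro i _
      rw [hR]; simp
    · intro i j hij
      simp only [OrderDual.toDual_lt_toDual] at hij
      have h1 : (i : ℕ) < (j : ℕ) := hij
      rw [hR, if_neg (by omega), if_neg (by omega), if_neg (by omega)]
  have hRunit : IsUnit R := by
    rw [Matrix.isUnit_iff_isUnit_det, hdet]; exact isUnit_one
  refine ⟨hRunit, ?_⟩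
  set b : Fin (s + 1) → ℝ := fun i =>
    r ^ (s - (i : ℕ)) * Real.sin (((s : ℝ) - (i : ℕ) + 1) * θ) / Real.sin θ with hb
  have hbR : Matrix.vecMul b R = fun j : Fin (s + 1) => if (j : ℕ) = s then (1 : ℝ) else 0 := by
    funext j
    have hj : (j : ℕ) ≤ s := Nat.lt_succ_iff.mp j.isLt
    simp only [Matrix.vecMul, dotProduct]
    have hterm : ∀ i : Fin (s + 1), b i * R i j =
        (if (i : ℕ) = (j : ℕ) then b i else 0)
          + (if (i : ℕ) = (j : ℕ) + 1 then b i * (-(2 * r * Real.cos θ)) else 0)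
          + (if (i : ℕ) = (j : ℕ) + 2 then b i * r ^ 2 else 0) := by
      intro i
      rw [hR]
      split_ifs <;> first | omega | ring
    rw [Finset.sum_congr rfl fun i _ => hterm i, Finset.sum_add_distrib,
      Finset.sum_add_distrib, sum_ind, sum_ind, sum_ind, dif_pos j.isLt]
    simp only [hb, Fin.val_mk]
    rcases Nat.lt_or_ge (↑j + 1) (s + 1) with h1 | h1
    · rcases Nat.lt_or_ge (↑j + 2) (s + 1) with h2 | h2
      · rw [dif_pos h1, dif_pos h2, if_neg (by omega)]
        exact key r θ ((s : ℝ) - ((j : ℕ) : ℝ)) ((s : ℝ) - ((((j : ℕ) + 1 : ℕ)) : ℝ))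
          ((s : ℝ) - ((((j : ℕ) + 2 : ℕ)) : ℝ))
          (r ^ (s - ↑j)) (r ^ (s - (↑j + 1))) (r ^ (s - (↑j + 2))) hsin
          (by push_cast; ring) (by push_cast; ring)
          (by rw [show s - (↑j : ℕ) = (s - (↑j + 1)) + 1 from by omega, pow_succ'])
          (by rw [show s - ((↑j : ℕ) + 1) = (s - (↑j + 2)) + 1 from by omega, pow_succ'])
      · -- ↑j + 1 = s
        have hjs : (↑j : ℕ) + 1 = s := by omega
        rw [dif_pos h1, dif_neg (by omega), if_neg (by omega), add_zero]
        have c1 : ((s : ℝ) - ↑↑j + 1) = 2 := by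
          have : (s : ℝ) = ↑↑j + 1 := by exact_mod_cast congrArg (Nat.cast : ℕ → ℝ) hjs.symm
          rw [this]; ring
        have c2 : ((s : ℝ) - ((((j : ℕ) + 1 : ℕ)) : ℝ) + 1) = 1 := by
          have : (s : ℝ) = ↑↑j + 1 := by exact_mod_cast congrArg (Nat.cast : ℕ → ℝ) hjs.symm
          rw [this]; push_cast; ring
        have n1 : s - (↑j : ℕ) = 1 := by omega
        have n2 : s - ((↑j : ℕ) + 1) = 0 := by omega
        rw [c1, c2, n1, n2, pow_zero, pow_one, one_mul, one_mul]
        rw [show (2 : ℝ) * θ = θ + θ from by ring, Real.sin_add]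
        field_simp
        ring
    · -- ↑j = s
      have hjs : (↑j : ℕ) = s := by omega
      rw [dif_neg (by omega), dif_neg (by omega), if_pos hjs, add_zero, add_zero]
      have c1 : ((s : ℝ) - ↑↑j + 1) = 1 := by rw [hjs]; ring
      rw [c1, hjs, Nat.sub_self, pow_zero, one_mul, one_mul, div_self hsin]
  have hinv : R * R⁻¹ = 1 := Matrix.mul_nonsing_inv R (by rw [hdet]; exact isUnit_one)
  intro i
  have : Matrix.vecMul (fun j : Fin (s + 1) => if (j : ℕ) = s then (1 : ℝ) else 0) R⁻¹
      = b := by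
    rw [← hbR, Matrix.vecMul_vecMul, hinv, Matrix.vecMul_one]
  rw [this]
end
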